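/- (Proposition 3, sensitivity identification.) In the bidirectional structural model under Assumption 2, suppose σ > 0, γ1 > γ2², μxz ≠ 0, μyw ≠ 0, βxy·βyx ≠ 1, and additionally k1² ≠ 1, where k1 = ξyz/ξxz and k2 = ξxw/ξyw are the Probit coefficient ratios. Let Δ1 = γ1·(k1² − 1)·(k2² − 1) + γ2²·(k1 − k2)². Then Δ1 ≥ 0, and there exists ε ∈ {+1, −1} such that βxy = (γ2·k1·(k2 − k1) + ε·k1·√Δ1) / (γ1·(k1² − 1)); moreover βxy has the same sign as k1 (both zero simultaneously), and if βxy ≠ 0 then βyx = k1·k2/βxy. -/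

import Mathlib

/-- Proposition 3, sensitivity identification: the forward
causal effect is given by the closed-form root formula with some sign choice,
it has the same sign as `k1`, and the reverse effect is `k1·k2/βxy`. -/
theorem stmt_12 (μx0 μy0 μxz μyw βxy βyx σ γ1 γ2 : ℝ)
    (hσ : 0 < σ) (hγ : γ2 ^ 2 < γ1)
    (hμxz : μxz ≠ 0) (hμyw : μyw ≠ 0) (hβ : βxy * βyx ≠ 1)
    (c lam1 lam2 ξxz ξxw ξyz ξyw k1 k2 Δ1 : ℝ)
    (hc : c = 1 / (1 - βxy * βyx))
    (hlam1 : lam1 = σ ^ 2 * c ^ 2 * (γ1 + 2 * βyx * γ2 + βyx ^ 2))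
    (hlam2 : lam2 = σ ^ 2 * c ^ 2 * (βxy ^ 2 * γ1 + 2 * βxy * γ2 + 1))
    (hξxz : ξxz = c * μxz / Real.sqrt lam1)
    (hξxw : ξxw = c * βyx * μyw / Real.sqrt lam1)
    (hξyz : ξyz = c * βxy * μxz / Real.sqrt lam2)
    (hξyw : ξyw = c * μyw / Real.sqrt lam2)
    (hk1 : k1 = ξyz / ξxz) (hk2 : k2 = ξxw / ξyw)
    (hk1sq : k1 ^ 2 ≠ 1)
    (hΔ1 : Δ1 = γ1 * (k1 ^ 2 - 1) * (k2 ^ 2 - 1) + γ2 ^ 2 * (k1 - k2) ^ 2) :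
    0 ≤ Δ1 ∧
    (∃ ε : ℝ, (ε = 1 ∨ ε = -1) ∧
      βxy = (γ2 * k1 * (k2 - k1) + ε * k1 * Real.sqrt Δ1) / (γ1 * (k1 ^ 2 - 1))) ∧
    Real.sign βxy = Real.sign k1 ∧ (βxy = 0 ↔ k1 = 0) ∧
    (βxy ≠ 0 → βyx = k1 * k2 / βxy) := by
  have hγ1pos : 0 < γ1 := lt_of_le_of_lt (sq_nonneg γ2) hγ
  have hcne : c ≠ 0 := by
    rw [hc]
    have : 1 - βxy * βyx ≠ 0 := fun h => hβ (by linarith [sub_eq_zero.mp h])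
    positivity
  have ha : 0 < γ1 + 2 * βyx * γ2 + βyx ^ 2 := by
    nlinarith [sq_nonneg (γ2 + βyx)]
  have hb : 0 < βxy ^ 2 * γ1 + 2 * βxy * γ2 + 1 := by
    rcases eq_or_ne βxy 0 with h | h
    · rw [h]; norm_num
    · nlinarith [sq_nonneg (βxy * γ2 + 1), mul_pos (pow_pos (abs_pos.mpr h) 2) (sub_pos.mpr hγ),
        sq_abs βxy]
  have hl1 : 0 < lam1 := by rw [hlam1]; positivity
  have hl2 : 0 < lam2 := by rw [hlam2]; positivity
  set s1 := Real.sqrt lam1 with hs1def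
  set s2 := Real.sqrt lam2 with hs2def
  have hs1 : 0 < s1 := Real.sqrt_pos.mpr hl1
  have hs2 : 0 < s2 := Real.sqrt_pos.mpr hl2
  have hs1sq : s1 ^ 2 = lam1 := Real.sq_sqrt hl1.le
  have hs2sq : s2 ^ 2 = lam2 := Real.sq_sqrt hl2.le
  have hK1 : k1 * s2 = βxy * s1 := by
    rw [hk1, hξyz, hξxz]
    field_simp
  have hK2 : k2 * s1 = βyx * s2 := by
    rw [hk2, hξxw, hξyw]
    field_simp
  -- k1 k2 = βxy βyx
  have hprod : k1 * k2 = βxy * βyx :=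
    mul_right_cancel₀ (mul_ne_zero hs1.ne' hs2.ne')
      (by linear_combination (k2 * s1) * hK1 + (βxy * s1) * hK2 :
        (k1 * k2) * (s1 * s2) = (βxy * βyx) * (s1 * s2))
  -- k1² lam2 = βxy² lam1
  have hsq : k1 ^ 2 * lam2 = βxy ^ 2 * lam1 := by
    rw [← hs1sq, ← hs2sq]; linear_combination (k1 * s2 + βxy * s1) * hK1
  -- k1² b = βxy² a
  have hscpos : (0:ℝ) < σ ^ 2 * c ^ 2 := by positivity
  have hAB : k1 ^ 2 * (βxy ^ 2 * γ1 + 2 * βxy * γ2 + 1)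
      = βxy ^ 2 * (γ1 + 2 * βyx * γ2 + βyx ^ 2) := by
    have h2 := hsq
    rw [hlam1, hlam2] at h2
    exact mul_left_cancel₀ hscpos.ne' (by linear_combination h2)
  -- quadratic: E = 0
  have hE : γ1 * (k1 ^ 2 - 1) * βxy ^ 2 + 2 * γ2 * k1 * (k1 - k2) * βxy
      + k1 ^ 2 * (1 - k2 ^ 2) = 0 := by
    linear_combination hAB - (2 * γ2 * βxy + k1 * k2 + βxy * βyx) * hprod
  -- D² = k1² Δ1
  set D := γ1 * (k1 ^ 2 - 1) * βxy - γ2 * k1 * (k2 - k1) with hD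
  have hDsq : D ^ 2 = k1 ^ 2 * Δ1 := by
    rw [hD, hΔ1]; linear_combination γ1 * (k1 ^ 2 - 1) * hE
  -- sign equivalence
  have hzero : βxy = 0 ↔ k1 = 0 := by
    constructor
    · intro h
      have h2 : k1 * s2 = 0 := by rw [hK1, h, zero_mul]
      rcases mul_eq_zero.mp h2 with h' | h'
      · exact h'
      · exact absurd h' hs2.ne'
    · intro h
      have h2 : βxy * s1 = 0 := by rw [← hK1, h, zero_mul]
      rcases mul_eq_zero.mp h2 with h' | h'
      · exact h'
      · exact absurd h' hs1.ne'
  -- Δ1 ≥ 0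
  have hΔnn : 0 ≤ Δ1 := by
    by_cases hk0 : k1 = 0
    · have hβ0 : βxy = 0 := hzero.mpr hk0
      -- k2² a = βyx² since b = 1
      have hsq2 : k2 ^ 2 * lam1 = βyx ^ 2 * lam2 := by
        rw [← hs1sq, ← hs2sq]; linear_combination (k2 * s1 + βyx * s2) * hK2
      have hAB2 : k2 ^ 2 * (γ1 + 2 * βyx * γ2 + βyx ^ 2) = βyx ^ 2 := by
        rw [hlam1, hlam2, hβ0] at hsq2
        exact mul_left_cancel₀ hscpos.ne' (by linear_combination hsq2)
      have key : Δ1 * (γ1 + 2 * βyx * γ2 + βyx ^ 2) = (γ1 + βyx * γ2) ^ 2 := by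
        rw [hΔ1, hk0]
        linear_combination (γ2 ^ 2 - γ1) * hAB2
      have h3 : 0 ≤ Δ1 * (γ1 + 2 * βyx * γ2 + βyx ^ 2) := by
        rw [key]; exact sq_nonneg _
      exact (mul_nonneg_iff_of_pos_right ha).mp h3
    · have h1 : 0 ≤ k1 ^ 2 * Δ1 := by rw [← hDsq]; exact sq_nonneg D
      have hk1sqpos : 0 < k1 ^ 2 := by positivity
      exact (mul_nonneg_iff_of_pos_left hk1sqpos).mp h1
  refine ⟨hΔnn, ?_, ?_, hzero, ?_⟩
  · -- existence of ε
    have hden : γ1 * (k1 ^ 2 - 1) ≠ 0 := by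
      have : k1 ^ 2 - 1 ≠ 0 := sub_ne_zero.mpr hk1sq
      exact mul_ne_zero hγ1pos.ne' this
    have hfact : (D - k1 * Real.sqrt Δ1) * (D + k1 * Real.sqrt Δ1) = 0 := by
      have h := Real.sq_sqrt hΔnn
      linear_combination hDsq - k1 ^ 2 * h
    rcases mul_eq_zero.mp hfact with h | h
    · refine ⟨1, Or.inl rfl, ?_⟩
      have hDeq : D = k1 * Real.sqrt Δ1 := by linarith
      rw [eq_div_iff hden]
      rw [hD] at hDeq; linarith [hDeq]
    · refine ⟨-1, Or.inr rfl, ?_⟩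
      have hDeq : D = -(k1 * Real.sqrt Δ1) := by linarith
      rw [eq_div_iff hden]
      rw [hD] at hDeq; linarith [hDeq]
  · -- sign
    have hk1e : k1 = βxy * (s1 / s2) := by
      field_simp
      linarith [hK1]
    have hr : 0 < s1 / s2 := div_pos hs1 hs2
    rcases lt_trichotomy βxy 0 with h | h | h
    · rw [Real.sign_of_neg h, Real.sign_of_neg (by rw [hk1e]; exact mul_neg_of_neg_of_pos h hr)]
    · rw [h, Real.sign_zero, hzero.mp h, Real.sign_zero]
    · rw [Real.sign_of_pos h, Real.sign_of_pos (by rw [hk1e]; positivity)]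
  · intro hne
    rw [eq_div_iff hne, hprod]; ring
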